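/- Let L(X,Y) = (-(X-1)² + Y(Y-X))/X and G(X,Y) = (X-Y)/X. Then both L(X,Y) + G(X,Y) > 0 and G(X,Y) > 0 hold simultaneously if and only if (X,Y) belongs to the set S₊ = {(X,Y) ∈ (0,∞)² : 0 < Y < 1 and ((3-Y) - √5(1-Y))/2 < X < ((3-Y) + √5(1-Y))/2}. -/

import Mathlib

theorem stmt_5 (X Y : ℝ) (hX : 0 < X) (hY : 0 < Y) :
    ((-(X - 1)^2 + Y * (Y - X)) / X + (X - Y) / X > 0 ∧ (X - Y) / X > 0)
    ↔ (Y < 1 ∧ ((3 - Y) - Real.sqrt 5 * (1 - Y)) / 2 < X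
             ∧ X < ((3 - Y) + Real.sqrt 5 * (1 - Y)) / 2) := by
  have hs2 : Real.sqrt 5 ^ 2 = 5 := Real.sq_sqrt (by norm_num)
  have hs0 : (0:ℝ) ≤ Real.sqrt 5 := Real.sqrt_nonneg 5
  have hs3 : Real.sqrt 5 < 3 := by nlinarith
  have hs2' : 2 < Real.sqrt 5 := by nlinarith
  set s := Real.sqrt 5
  rw [← add_div, gt_iff_lt, gt_iff_lt, lt_div_iff₀ hX, lt_div_iff₀ hX,
    zero_mul]
  constructor
  · rintro ⟨h1, h2⟩
    have hY1 : Y < 1 := by nlinarith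
    have hsY : 0 ≤ s * (1 - Y) := mul_nonneg hs0 (by linarith)
    refine ⟨hY1, ?_, ?_⟩
    · by_contra h
      push_neg at h
      nlinarith [hsY, hs2, sq_nonneg (1 - Y)]
    · by_contra h
      push_neg at h
      nlinarith [hsY, hs2, sq_nonneg (1 - Y)]
  · rintro ⟨hY1, h1, h2⟩
    have h5 : s^2 * (1-Y)^2 = 5 * (1-Y)^2 := by rw [hs2]
    have hkey : 0 < (2*X - 3 + Y + s*(1-Y)) * (3 - Y + s*(1-Y) - 2*X) :=
      mul_pos (by linarith) (by linarith)
    constructor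
    · nlinarith [hkey, hs2, h5]
    · nlinarith [hkey, hs2, h5, mul_nonneg hs0 (by linarith : (0:ℝ) ≤ 1 - Y)]
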